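/- For every integer k ≥ 1, the Bernoulli numbers satisfy ((2^{k+1} - 1)/(k+1)) · B_{k+1} = 1/2 - Σ_{l=1}^{k} (k choose l) · ((2^{l+1} - 1)/(l+1)) · B_{l+1}. -/

import Mathlib

open PowerSeries Finset Nat

lemma aux_ps : (PowerSeries.mk fun m => ((2:ℚ)^m - 1) * bernoulli m / m !) * (exp ℚ + 1) = -X := by
  have hB : bernoulliPowerSeries ℚ * (exp ℚ - 1) = X := bernoulliPowerSeries_mul_exp_sub_one ℚ
  have hR : rescale (2:ℚ) (bernoulliPowerSeries ℚ) * (exp ℚ ^ 2 - 1) = C (2:ℚ) * X := by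
    have h2 := congrArg (rescale (2:ℚ)) hB
    rw [map_mul, map_sub, map_one, rescale_X] at h2
    rw [exp_pow_eq_rescale_exp]
    norm_num at h2 ⊢
    exact h2
  have hP : (PowerSeries.mk fun m => ((2:ℚ)^m - 1) * bernoulli m / m !)
      = rescale (2:ℚ) (bernoulliPowerSeries ℚ) - bernoulliPowerSeries ℚ := by
    ext n
    simp [coeff_rescale, bernoulliPowerSeries, algebraMap]
    ring
  have hexp : exp ℚ - 1 ≠ 0 := by
    intro h
    have := congrArg (coeff 1) h
    simp [coeff_exp] at this
  apply mul_right_cancel₀ hexp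
  rw [hP]
  have h0 : (C (R := ℚ)) 2 = 2 := map_ofNat (C (R := ℚ)) 2
  linear_combination hR - (exp ℚ + 1) * hB + X * h0

lemma aux_key (n : ℕ) (hn : 2 ≤ n) :
    ∑ i ∈ range (n+1), (n.choose i : ℚ) * ((2^i - 1) * bernoulli i) = -((2^n - 1) * bernoulli n) := by
  have h := congrArg (coeff n) aux_ps
  rw [coeff_mul, Finset.Nat.sum_antidiagonal_eq_sum_range_succ_mk] at h
  simp [coeff_exp, coeff_one, coeff_X] at h
  rw [if_neg (by omega : ¬ n = 1)] at h
  simp_rw [mul_add, sum_add_distrib] at h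
  have hn0 : ∑ x ∈ range (n+1), ((2:ℚ)^x-1)*bernoulli x / x ! * (if n - x = 0 then (1:ℚ) else 0)
      = (2^n-1)*bernoulli n / n ! := by
    rw [Finset.sum_eq_single n]
    · simp
    · intro i hi hne
      rw [if_neg (by rw [mem_range] at hi; omega), mul_zero]
    · intro hn'; exact absurd (self_mem_range_succ n) hn'
  rw [hn0] at h
  have h1 : ∑ x ∈ range (n+1), ((2:ℚ)^x-1)*bernoulli x / x ! * ((((n-x)! : ℚ))⁻¹)
      = -((2^n-1)*bernoulli n / n !) := by linarith
  have hfac : ∀ m : ℕ, (m ! : ℚ) ≠ 0 := fun m => by exact_mod_cast m.factorial_ne_zero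
  calc ∑ i ∈ range (n+1), (n.choose i : ℚ) * ((2^i - 1) * bernoulli i)
      = ∑ i ∈ range (n+1), (n ! : ℚ) * (((2:ℚ)^i-1)*bernoulli i / i ! * ((((n-i)! : ℚ))⁻¹)) := by
        refine sum_congr rfl fun i hi => ?_
        rw [mem_range] at hi
        rw [Nat.cast_choose ℚ (by omega : i ≤ n)]
        field_simp
    _ = (n ! : ℚ) * ∑ i ∈ range (n+1), ((2:ℚ)^i-1)*bernoulli i / i ! * ((((n-i)! : ℚ))⁻¹) := by
        rw [mul_sum]
    _ = -((2 ^ n - 1) * bernoulli n) := by rw [h1]; field_simp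


theorem bernoulli_recursion (k : ℕ) (hk : 1 ≤ k) :
    ((2 ^ (k + 1) - 1 : ℚ) / (k + 1)) * bernoulli (k + 1) =
      1 / 2 - ∑ l ∈ Finset.Icc 1 k,
        (k.choose l : ℚ) * ((2 ^ (l + 1) - 1) / (l + 1)) * bernoulli (l + 1) := by
  have key := aux_key (k+1) (by omega)
  rw [Finset.sum_range_succ'] at key
  rw [Finset.sum_range_succ'] at key
  norm_num at key
  have hk1 : ((k:ℚ)+1) ≠ 0 := by positivity
  rw [show Finset.Icc 1 k = Finset.Ico 1 (k+1) from (Finset.Ico_add_one_right_eq_Icc (a := 1) (b := k)).symm,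
    Finset.sum_Ico_eq_sum_range]
  simp only [Nat.add_sub_cancel]
  have hterm : ∀ i ∈ range k,
      (k.choose (1+i) : ℚ) * ((2 ^ (1+i+1) - 1) / (↑(1+i) + 1)) * bernoulli (1+i+1)
        = ((k+1).choose (i+1+1) : ℚ) * ((2 ^ (i+1+1) - 1) * bernoulli (i+1+1)) / ((k:ℚ)+1) := by
    intro i _
    rw [Nat.add_comm 1 i]
    have hc : ((k+1) * k.choose (i+1) : ℚ) = ((k+1).choose (i+2) : ℚ) * (i+2) := by
      exact_mod_cast congrArg (Nat.cast (R := ℚ)) (Nat.add_one_mul_choose_eq k (i+1))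
    have hi2 : ((i:ℚ)+1+1) ≠ 0 := by positivity
    push_cast at hc ⊢
    field_simp
    linear_combination ((2:ℚ) ^ (i+1+1) - 1) * bernoulli (i+1+1) * hc
  rw [Finset.sum_congr rfl hterm, ← Finset.sum_div]
  rw [eq_sub_iff_add_eq, div_mul_eq_mul_div, ← add_div, div_eq_iff hk1]
  linear_combination key
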